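/- Let h : [0,∞) → ℝ be a continuous function with h(t) > 0 for all t ≥ 0, let k : [0,∞) → ℝ be a nonnegative and nondecreasing function, let G : [0,∞) → ℝ satisfy lim_{t→∞} G(t)/t = 0, and let c ≥ 0 and d > 0 be real constants such that ln h(t) ≤ c·t + k(t) − d·∫₀ᵗ h(s) ds + G(t) for all t ≥ 0. Then limsup_{t→∞} (1/t)·( −k(t) + d·∫₀ᵗ h(s) ds ) ≤ c. -/

import Mathlib

open MeasureTheory Filter

lemma limit_aux (a A B : ℝ) (ha : 0 < a) (hA : 0 < A) (hB : 0 < B) :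
    Tendsto (fun t => (1/t) * Real.log (A + B * Real.exp (a * t))) atTop (nhds a) := by
  have hexp : Tendsto (fun t : ℝ => Real.exp (-(a*t))) atTop (nhds 0) := by
    refine Real.tendsto_exp_neg_atTop_nhds_zero.comp ?_
    exact Tendsto.const_mul_atTop ha tendsto_id
  have hlog : Tendsto (fun t : ℝ => Real.log (A * Real.exp (-(a*t)) + B)) atTop
      (nhds (Real.log B)) := by
    have hsum : Tendsto (fun t : ℝ => A * Real.exp (-(a*t)) + B) atTop (nhds (A * 0 + B)) :=
      (hexp.const_mul A).add tendsto_const_nhds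
    rw [mul_zero, zero_add] at hsum
    exact ((Real.continuousAt_log (ne_of_gt hB)).tendsto).comp hsum
  have hinv : Tendsto (fun t : ℝ => 1/t) atTop (nhds 0) := by
    simpa [one_div] using tendsto_inv_atTop_zero
  have h1 : Tendsto (fun t : ℝ => a + (1/t) * Real.log (A * Real.exp (-(a*t)) + B)) atTop
      (nhds (a + 0 * Real.log B)) := tendsto_const_nhds.add (hinv.mul hlog)
  rw [zero_mul, add_zero] at h1
  refine h1.congr' ?_
  filter_upwards [eventually_ge_atTop (1:ℝ)] with t ht
  have ht0 : (0:ℝ) < t := lt_of_lt_of_le one_pos ht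
  have hkey : A + B * Real.exp (a * t) = Real.exp (a*t) * (A * Real.exp (-(a*t)) + B) := by
    rw [mul_add, ← mul_assoc, mul_comm (Real.exp (a*t)) A, mul_assoc,
      ← Real.exp_add]
    simp [mul_comm]
  rw [hkey, Real.log_mul (Real.exp_pos _).ne' (by positivity), Real.log_exp]
  field_simp

/-- Lemma 3.4: if `ln h(t) ≤ c t + k(t) − d ∫₀ᵗ h + G(t)` with `k` nonnegative
nondecreasing and `G(t)/t → 0`, then
`limsup (1/t)(−k(t) + d ∫₀ᵗ h) ≤ c`. -/
theorem stmt0 (h k G : ℝ → ℝ) (c d : ℝ)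
    (hc : 0 ≤ c) (hd : 0 < d)
    (hcont : ContinuousOn h (Set.Ici (0 : ℝ)))
    (hpos : ∀ t : ℝ, 0 ≤ t → 0 < h t)
    (hknn : ∀ t : ℝ, 0 ≤ t → 0 ≤ k t)
    (hkmono : ∀ s t : ℝ, 0 ≤ s → s ≤ t → k s ≤ k t)
    (hG : Tendsto (fun t => G t / t) atTop (nhds 0))
    (hineq : ∀ t : ℝ, 0 ≤ t →
      Real.log (h t) ≤ c * t + k t - d * (∫ s in (0:ℝ)..t, h s) + G t) :
    Filter.limsup (fun t => (1 / t) * (-(k t) + d * ∫ s in (0:ℝ)..t, h s)) atTop ≤ c := by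
  -- extend h continuously to all of ℝ
  set h₁ : ℝ → ℝ := fun s => h (max s 0) with hh₁
  have h₁cont : Continuous h₁ :=
    hcont.comp_continuous (continuous_id.max continuous_const) (fun x => le_max_right x 0)
  have h₁eq : ∀ s : ℝ, 0 ≤ s → h₁ s = h s := fun s hs => by
    simp [hh₁, max_eq_left hs]
  set F : ℝ → ℝ := fun t => ∫ s in (0:ℝ)..t, h₁ s with hF
  have hFeq : ∀ t : ℝ, 0 ≤ t → F t = ∫ s in (0:ℝ)..t, h s := by
    intro t ht
    refine intervalIntegral.integral_congr (fun s hs => ?_)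
    rw [Set.uIcc_of_le ht] at hs
    exact h₁eq s hs.1
  have hFderiv : ∀ t : ℝ, HasDerivAt F (h₁ t) t := fun t =>
    (h₁cont.integral_hasStrictDerivAt 0 t).hasDerivAt
  -- main estimate
  have key : ∀ ε : ℝ, 0 < ε → ∀ᶠ t in atTop,
      (1 / t) * (-(k t) + d * ∫ s in (0:ℝ)..t, h s) ≤ c + 2*ε := by
    intro ε hε
    set a : ℝ := c + ε with hadef
    have ha : 0 < a := by positivity
    -- choose T with G s ≤ ε s for s ≥ T
    obtain ⟨T₀, hT₀⟩ := (eventually_atTop.1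
      (hG.eventually (eventually_abs_sub_lt 0 hε)))
    set T : ℝ := max T₀ 1 with hTdef
    have hT1 : (1:ℝ) ≤ T := le_max_right _ _
    have hT0 : (0:ℝ) ≤ T := le_trans zero_le_one hT1
    have hGbound : ∀ s : ℝ, T ≤ s → G s ≤ ε * s := by
      intro s hs
      have hs0 : (0:ℝ) < s := lt_of_lt_of_le one_pos (le_trans hT1 hs)
      have h2 : G s / s < ε :=
        lt_of_le_of_lt (le_abs_self _) (by simpa using hT₀ s (le_trans (le_max_left _ _) hs))
      have := (div_le_iff₀ hs0).1 h2.le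
      linarith
    -- constants
    set A : ℝ := Real.exp (d * F T) with hAdef
    have hA : 0 < A := Real.exp_pos _
    set B : ℝ := d / a with hBdef
    have hB : 0 < B := div_pos hd ha
    have hFcont : Continuous F := by
      rw [continuous_iff_continuousAt]; exact fun s => (hFderiv s).continuousAt
    -- core Gronwall bound
    have core : ∀ t : ℝ, T ≤ t →
        -(k t) + d * F t ≤ Real.log (A + B * Real.exp (a * t)) := by
      intro t htT
      have ht0 : (0:ℝ) ≤ t := le_trans hT0 htT
      set K : ℝ := d * Real.exp (k t) / a with hKdef
      have hK : 0 < K := by positivity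
      set u : ℝ → ℝ := fun s => K * Real.exp (a * s) - Real.exp (d * F s) with hudef
      have huderiv : ∀ s : ℝ, HasDerivAt u
          (K * (a * Real.exp (a * s)) - d * h₁ s * Real.exp (d * F s)) s := by
        intro s
        have h1 : HasDerivAt (fun s : ℝ => Real.exp (a * s)) (Real.exp (a*s) * a) s := by
          simpa using ((hasDerivAt_id s).const_mul a).exp
        have h2 : HasDerivAt (fun s : ℝ => Real.exp (d * F s)) (Real.exp (d * F s) * (d * h₁ s)) s :=
          ((hFderiv s).const_mul d).exp
        have := (h1.const_mul K).sub h2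
        refine this.congr_deriv ?_
        ring
      have humono : MonotoneOn u (Set.Icc T t) := by
        apply monotoneOn_of_deriv_nonneg (convex_Icc T t)
        · exact ((continuous_const.mul (Real.continuous_exp.comp
            (continuous_const.mul continuous_id))).sub
            (Real.continuous_exp.comp (continuous_const.mul hFcont))).continuousOn
        · exact fun s _ => ((huderiv s).differentiableAt).differentiableWithinAt
        · intro s hs
          rw [interior_Icc] at hs
          rw [(huderiv s).deriv]
          have hsT : T ≤ s := hs.1.le
          have hs0 : (0:ℝ) ≤ s := le_trans hT0 hsT
          have hst : s ≤ t := hs.2.le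
          rw [h₁eq s hs0]
          have hKa : K * a = d * Real.exp (k t) := by
            rw [hKdef]; field_simp
          have hhs : h s * Real.exp (d * F s) ≤ Real.exp (k t) * Real.exp (a * s) := by
            have := hineq s hs0
            rw [← hFeq s hs0] at this
            have hlog : Real.log (h s) + d * F s ≤ k t + a * s := by
              have hks : k s ≤ k t := hkmono s t hs0 hst
              have hGs : G s ≤ ε * s := hGbound s hsT
              rw [hadef]; nlinarith
            calc h s * Real.exp (d * F s) = Real.exp (Real.log (h s) + d * F s) := by
                  rw [Real.exp_add, Real.exp_log (hpos s hs0)]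
              _ ≤ Real.exp (k t + a * s) := Real.exp_le_exp.2 hlog
              _ = Real.exp (k t) * Real.exp (a * s) := Real.exp_add _ _
          have : d * (h s * Real.exp (d * F s)) ≤ d * (Real.exp (k t) * Real.exp (a * s)) :=
            mul_le_mul_of_nonneg_left hhs hd.le
          have heq : K * (a * Real.exp (a * s)) = d * (Real.exp (k t) * Real.exp (a * s)) := by
            rw [← mul_assoc, hKa, mul_assoc]
          rw [heq]
          linarith [this]
      have huTt : u T ≤ u t :=
        humono (Set.left_mem_Icc.2 htT) (Set.right_mem_Icc.2 htT) htT
      have hexpF : Real.exp (d * F t) ≤ A + K * Real.exp (a * t) := by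
        have hKT : 0 < K * Real.exp (a * T) := by positivity
        simp only [hudef] at huTt
        rw [hAdef]; nlinarith
      -- take logs
      have hdFt : d * F t ≤ Real.log (A + K * Real.exp (a * t)) := by
        have := Real.log_le_log (Real.exp_pos _) hexpF
        rwa [Real.log_exp] at this
      have hkt : 0 ≤ k t := hknn t ht0
      have hstep : Real.log (A + K * Real.exp (a * t)) - k t
          ≤ Real.log (A + B * Real.exp (a * t)) := by
        have hKB : K * Real.exp (-(k t)) = B := by
          rw [hKdef, hBdef]
          rw [div_mul_eq_mul_div, mul_assoc, ← Real.exp_add]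
          simp
        have h1 : Real.log (A + K * Real.exp (a * t)) - k t
            = Real.log ((A + K * Real.exp (a * t)) * Real.exp (-(k t))) := by
          rw [Real.log_mul (by positivity) (Real.exp_pos _).ne', Real.log_exp]; ring
        rw [h1]
        apply Real.log_le_log (by positivity)
        have hek : Real.exp (-(k t)) ≤ 1 := Real.exp_le_one_iff.2 (by linarith)
        have : (A + K * Real.exp (a * t)) * Real.exp (-(k t))
            = A * Real.exp (-(k t)) + B * Real.exp (a * t) := by
          rw [← hKB]; ring
        rw [this]
        have : A * Real.exp (-(k t)) ≤ A := by nlinarith [Real.exp_pos (-(k t))]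
        linarith
      linarith
    -- conclude
    have hev : ∀ᶠ t in atTop,
        (1/t) * Real.log (A + B * Real.exp (a * t)) < a + ε :=
      (limit_aux a A B ha hA hB).eventually_lt_const (by linarith)
    filter_upwards [hev, eventually_ge_atTop T] with t h1 h2
    have ht0 : (0:ℝ) < t := lt_of_lt_of_le (lt_of_lt_of_le one_pos hT1) h2
    rw [← hFeq t ht0.le]
    calc (1/t) * (-(k t) + d * F t) ≤ (1/t) * Real.log (A + B * Real.exp (a * t)) :=
        mul_le_mul_of_nonneg_left (core t h2) (by positivity)
      _ ≤ c + 2*ε := by rw [hadef] at h1; linarith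
  -- final limsup argument
  rw [limsup_eq]
  by_cases hb : BddBelow {x | ∀ᶠ t in atTop,
      (1/t) * (-(k t) + d * ∫ s in (0:ℝ)..t, h s) ≤ x}
  · refine le_of_forall_pos_le_add fun ε hε => csInf_le hb ?_
    have := key (ε/2) (by positivity)
    have h2 : c + 2*(ε/2) = c + ε := by ring
    rw [h2] at this
    exact this
  · rw [Real.sInf_of_not_bddBelow hb]; exact hc
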